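/- Uniqueness of the completion: for any triple subgraph M ↪ T, the completion C(M,T) exists and is unique, i.e., there is exactly one smallest triple graph G with M ↪ G ↪ T satisfying the closure conditions (no node of G|_s is related to a node of T|_t outside G|_t, no node of G|_t is related to a node of T|_s outside G|_s, all unrelated nodes of T are in G, and G contains all edges of T between its nodes). -/

import Mathlib

structure TGGraph where
  V : Type
  E : Type
  s : E → V
  t : E → V

structure TripleGraph where
  Gs : TGGraph
  Gc : TGGraph
  Gt : TGGraph
  cs : Gc.V → Gs.V
  ct : Gc.V → Gt.V

/-- `x rel y`: source node `x` is related to target node `y` via a correspondence node. -/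
def TripleGraph.rel (T : TripleGraph) (x : T.Gs.V) (y : T.Gt.V) : Prop :=
  ∃ m : T.Gc.V, T.cs m = x ∧ T.ct m = y

/-- A triple subgraph of `T`, given by subsets of nodes and edges of each component,
closed under source/target maps and correspondence functions. -/
structure TripleSub (T : TripleGraph) where
  Vs : Set T.Gs.V
  Es : Set T.Gs.E
  Vc : Set T.Gc.V
  Ec : Set T.Gc.E
  Vt : Set T.Gt.V
  Et : Set T.Gt.E
  hss : ∀ e ∈ Es, T.Gs.s e ∈ Vs
  hst : ∀ e ∈ Es, T.Gs.t e ∈ Vs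
  hcs' : ∀ e ∈ Ec, T.Gc.s e ∈ Vc
  hct' : ∀ e ∈ Ec, T.Gc.t e ∈ Vc
  hts : ∀ e ∈ Et, T.Gt.s e ∈ Vt
  htt : ∀ e ∈ Et, T.Gt.t e ∈ Vt
  hcsV : ∀ v ∈ Vc, T.cs v ∈ Vs
  hctV : ∀ v ∈ Vc, T.ct v ∈ Vt

/-- Componentwise inclusion of triple subgraphs (`M ↪ G`). -/
def TripleSub.le {T : TripleGraph} (M G : TripleSub T) : Prop :=
  M.Vs ⊆ G.Vs ∧ M.Es ⊆ G.Es ∧ M.Vc ⊆ G.Vc ∧ M.Ec ⊆ G.Ec ∧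
  M.Vt ⊆ G.Vt ∧ M.Et ⊆ G.Et

/-- The full subgraph of `T` (i.e. `T` itself). -/
def TripleSub.top (T : TripleGraph) : TripleSub T :=
  ⟨Set.univ, Set.univ, Set.univ, Set.univ, Set.univ, Set.univ,
   fun _ _ => trivial, fun _ _ => trivial, fun _ _ => trivial,
   fun _ _ => trivial, fun _ _ => trivial, fun _ _ => trivial,
   fun _ _ => trivial, fun _ _ => trivial⟩

/-- The closure conditions of the completion: no node of `G|_s` is related to a
node of `T|_t` outside `G|_t` and vice versa; all unrelated nodes of `T` are in
`G`; and `G` contains all edges of `T` between its nodes. -/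
def TripleSub.Closed {T : TripleGraph} (G : TripleSub T) : Prop :=
  (∀ n ∈ G.Vs, ∀ m : T.Gt.V, T.rel n m → m ∈ G.Vt) ∧
  (∀ x ∈ G.Vt, ∀ y : T.Gs.V, T.rel y x → y ∈ G.Vs) ∧
  (∀ z : T.Gs.V, (∀ y, ¬ T.rel z y) → z ∈ G.Vs) ∧
  (∀ z : T.Gt.V, (∀ y, ¬ T.rel y z) → z ∈ G.Vt) ∧
  (∀ e : T.Gs.E, T.Gs.s e ∈ G.Vs → T.Gs.t e ∈ G.Vs → e ∈ G.Es) ∧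
  (∀ e : T.Gt.E, T.Gt.s e ∈ G.Vt → T.Gt.t e ∈ G.Vt → e ∈ G.Et)

/-- `G` is the completion `C(M,T)`: the smallest closed triple subgraph containing `M`. -/
def IsCompletion {T : TripleGraph} (M G : TripleSub T) : Prop :=
  M.le G ∧ G.Closed ∧ ∀ G' : TripleSub T, M.le G' → G'.Closed → G.le G'


theorem TripleSub.le_antisymm {T : TripleGraph} {A B : TripleSub T}
    (h1 : A.le B) (h2 : B.le A) : A = B := by
  cases A; cases B
  simp only [TripleSub.mk.injEq]
  exact ⟨subset_antisymm h1.1 h2.1, subset_antisymm h1.2.1 h2.2.1,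
    subset_antisymm h1.2.2.1 h2.2.2.1, subset_antisymm h1.2.2.2.1 h2.2.2.2.1,
    subset_antisymm h1.2.2.2.2.1 h2.2.2.2.2.1, subset_antisymm h1.2.2.2.2.2 h2.2.2.2.2.2⟩

/-- for any triple subgraph `M ↪ T`, the completion `C(M,T)` exists
and is unique: there is exactly one smallest closed triple subgraph `G` with
`M ↪ G ↪ T` satisfying the closure conditions. -/
theorem stmt8 {T : TripleGraph} (M : TripleSub T) :
    ∃! G : TripleSub T, IsCompletion M G := by
  classical
  set P : TripleSub T → Prop := fun G' => M.le G' ∧ G'.Closed with hP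
  have hPtop : P (TripleSub.top T) := by
    refine ⟨⟨fun _ _ => trivial, fun _ _ => trivial, fun _ _ => trivial,
      fun _ _ => trivial, fun _ _ => trivial, fun _ _ => trivial⟩, ?_⟩
    exact ⟨fun _ _ _ _ => trivial, fun _ _ _ _ => trivial, fun _ _ => trivial,
      fun _ _ => trivial, fun _ _ _ => trivial, fun _ _ _ => trivial⟩
  let C : TripleSub T :=
    { Vs := {v | ∀ G', P G' → v ∈ G'.Vs}
      Es := {e | ∀ G', P G' → e ∈ G'.Es}
      Vc := {v | ∀ G', P G' → v ∈ G'.Vc}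
      Ec := {e | ∀ G', P G' → e ∈ G'.Ec}
      Vt := {v | ∀ G', P G' → v ∈ G'.Vt}
      Et := {e | ∀ G', P G' → e ∈ G'.Et}
      hss := fun e he G' hG' => G'.hss e (he G' hG')
      hst := fun e he G' hG' => G'.hst e (he G' hG')
      hcs' := fun e he G' hG' => G'.hcs' e (he G' hG')
      hct' := fun e he G' hG' => G'.hct' e (he G' hG')
      hts := fun e he G' hG' => G'.hts e (he G' hG')
      htt := fun e he G' hG' => G'.htt e (he G' hG')
      hcsV := fun v hv G' hG' => G'.hcsV v (hv G' hG')
      hctV := fun v hv G' hG' => G'.hctV v (hv G' hG') }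
  have hMC : M.le C :=
    ⟨fun v hv G' hG' => hG'.1.1 hv, fun e he G' hG' => hG'.1.2.1 he,
     fun v hv G' hG' => hG'.1.2.2.1 hv, fun e he G' hG' => hG'.1.2.2.2.1 he,
     fun v hv G' hG' => hG'.1.2.2.2.2.1 hv, fun e he G' hG' => hG'.1.2.2.2.2.2 he⟩
  have hCclosed : C.Closed := by
    refine ⟨?_, ?_, ?_, ?_, ?_, ?_⟩
    · exact fun n hn m hrel G' hG' => hG'.2.1 n (hn G' hG') m hrel
    · exact fun x hx y hrel G' hG' => hG'.2.2.1 x (hx G' hG') y hrel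
    · exact fun z hz G' hG' => hG'.2.2.2.1 z hz
    · exact fun z hz G' hG' => hG'.2.2.2.2.1 z hz
    · exact fun e hs ht G' hG' => hG'.2.2.2.2.2.1 e (hs G' hG') (ht G' hG')
    · exact fun e hs ht G' hG' => hG'.2.2.2.2.2.2 e (hs G' hG') (ht G' hG')
  have hmin : ∀ G' : TripleSub T, M.le G' → G'.Closed → C.le G' := by
    intro G' h1 h2
    exact ⟨fun v hv => hv G' ⟨h1, h2⟩, fun e he => he G' ⟨h1, h2⟩,
      fun v hv => hv G' ⟨h1, h2⟩, fun e he => he G' ⟨h1, h2⟩,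
      fun v hv => hv G' ⟨h1, h2⟩, fun e he => he G' ⟨h1, h2⟩⟩
  refine ⟨C, ⟨hMC, hCclosed, hmin⟩, ?_⟩
  rintro G ⟨hMG, hGc, hGmin⟩
  have h1 : G.le C := hGmin C hMC hCclosed
  have h2 : C.le G := hmin G hMG hGc
  exact TripleSub.le_antisymm h1 h2
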